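/- Let m, k be positive integers with m ≥ 2k, let t_1 < t_2 < ⋯ < t_n be distinct real numbers, let μ : ℝ → ℝ^m be the moment curve μ(t) = (t, t², …, t^m), and let P = conv{μ(t_1), …, μ(t_n)} be the corresponding cyclic polytope. Then P is k-neighborly: for every nonempty subset S ⊆ {t_1, …, t_n} with |S| ≤ k, the set conv{μ(t) : t ∈ S} is a face of P. -/

import Mathlib

open Polynomial Finset

/-- **Gale's theorem** on neighborliness of cyclic polytopes: for `m ≥ 2k`, the cyclic
polytope `P = conv{μ(t_1), …, μ(t_n)}` on the moment curve `μ(t) = (t, t², …, t^m)` in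
`ℝ^m` is `k`-neighborly: the convex hull of every nonempty set of at most `k` of its
vertices is a face of `P`. -/
theorem cyclic_polytope_neighborly (m k n : ℕ) (hm : 0 < m) (hk : 0 < k) (hmk : 2 * k ≤ m)
    (t : Fin n → ℝ) (ht : StrictMono t)
    (μ : ℝ → EuclideanSpace ℝ (Fin m))
    (hμ : ∀ s : ℝ, ∀ i : Fin m, μ s i = s ^ ((i : ℕ) + 1)) :
    ∀ S : Finset (Fin n), S.Nonempty → S.card ≤ k →
      IsExposed ℝ (convexHull ℝ (Set.range (μ ∘ t)))
        (convexHull ℝ (μ '' (t '' (S : Set (Fin n))))) := by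
  intro S hS hSk
  classical
  set p : Polynomial ℝ := ∏ i ∈ S, (X - C (t i)) ^ 2 with hp
  have hdeg : p.natDegree < m + 1 := by
    have h1 : p.natDegree ≤ ∑ i ∈ S, ((X - C (t i)) ^ 2).natDegree :=
      Polynomial.natDegree_prod_le _ _
    have h2 : ∀ i ∈ S, ((X - C (t i)) ^ 2).natDegree = 2 := by
      intro i _
      rw [Polynomial.natDegree_pow, Polynomial.natDegree_X_sub_C]
    rw [Finset.sum_congr rfl h2] at h1
    simp only [Finset.sum_const, smul_eq_mul] at h1
    omega
  have hevalp : ∀ s : ℝ, p.eval s = ∏ i ∈ S, (s - t i) ^ 2 := by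
    intro s; simp [hp, Polynomial.eval_prod]
  have hnonneg : ∀ s : ℝ, 0 ≤ p.eval s := by
    intro s; rw [hevalp]; exact Finset.prod_nonneg fun i _ => sq_nonneg _
  have hzero : ∀ i : Fin n, p.eval (t i) = 0 ↔ i ∈ S := by
    intro i
    rw [hevalp, Finset.prod_eq_zero_iff]
    constructor
    · rintro ⟨j, hj, hij⟩
      have : t i = t j := by
        have := sq_eq_zero_iff.mp hij; linarith
      rwa [ht.injective this]
    · intro hi; exact ⟨i, hi, by simp⟩
  -- the linear functional
  set c : EuclideanSpace ℝ (Fin m) := WithLp.toLp 2 (fun i : Fin m => -(p.coeff ((i : ℕ) + 1))) with hc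
  set l : EuclideanSpace ℝ (Fin m) →L[ℝ] ℝ := innerSL ℝ c with hl
  have hlval : ∀ s : ℝ, l (μ s) = p.coeff 0 - p.eval s := by
    intro s
    have : l (μ s) = ∑ i : Fin m, c i * μ s i := by
      simp [hl, PiLp.inner_apply, RCLike.inner_apply, starRingEnd_apply, mul_comm]
    rw [this]
    have heval : p.eval s = ∑ i ∈ Finset.range (m + 1), p.coeff i * s ^ i :=
      Polynomial.eval_eq_sum_range' hdeg s
    rw [Finset.sum_range_succ'] at heval
    simp only [pow_zero, mul_one] at heval
    have hsum : ∑ i : Fin m, c i * μ s i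
        = -∑ i ∈ Finset.range m, p.coeff (i + 1) * s ^ (i + 1) := by
      simp only [hc, hμ]
      rw [Fin.sum_univ_eq_sum_range (fun j => -p.coeff (j + 1) * s ^ (j + 1)) m]
      rw [← Finset.sum_neg_distrib]
      exact Finset.sum_congr rfl fun i _ => by ring
    rw [hsum]; linarith [heval]
  set c0 : ℝ := p.coeff 0 with hc0
  set P : Set (EuclideanSpace ℝ (Fin m)) := convexHull ℝ (Set.range (μ ∘ t)) with hP
  -- every point of P satisfies l y ≤ c0
  have hPle : ∀ y ∈ P, l y ≤ c0 := by
    intro y hy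
    have hsub : Set.range (μ ∘ t) ⊆ {y | l y ≤ c0} := by
      rintro _ ⟨i, rfl⟩
      simp only [Set.mem_setOf_eq, Function.comp_apply]
      rw [hlval]
      have := hnonneg (t i); linarith
    exact convexHull_min hsub (convex_halfSpace_le (LinearMap.isLinear l.toLinearMap) c0) hy
  -- every point of F satisfies l y = c0
  have himg : μ '' (t '' (S : Set (Fin n))) ⊆ {y | l y = c0} := by
    rintro _ ⟨_, ⟨i, hi, rfl⟩, rfl⟩
    simp only [Set.mem_setOf_eq]
    rw [hlval, (hzero i).mpr hi, sub_zero]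
  have hFeq : ∀ y ∈ convexHull ℝ (μ '' (t '' (S : Set (Fin n)))), l y = c0 := fun y hy =>
    convexHull_min himg (convex_hyperplane (LinearMap.isLinear l.toLinearMap) c0) hy
  have hFP : convexHull ℝ (μ '' (t '' (S : Set (Fin n)))) ⊆ P := by
    apply convexHull_mono
    rintro _ ⟨_, ⟨i, _, rfl⟩, rfl⟩
    exact ⟨i, rfl⟩
  intro _
  refine ⟨l, ?_⟩
  apply Set.Subset.antisymm
  · intro x hx
    refine ⟨hFP hx, fun y hy => ?_⟩
    rw [hFeq x hx]
    exact hPle y hy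
  · intro x hx
    obtain ⟨hxP, hxmax⟩ := hx
    obtain ⟨i₀, hi₀⟩ := hS
    have hμi₀ : μ (t i₀) ∈ P := subset_convexHull ℝ _ ⟨i₀, rfl⟩
    have hxc0 : l x = c0 := by
      have h1 := hxmax (μ (t i₀)) hμi₀
      rw [hlval, (hzero i₀).mpr hi₀, sub_zero] at h1
      exact le_antisymm (hPle x hxP) h1
    -- represent x as convex combination of vertices
    have hrange : Set.range (μ ∘ t) = ((Finset.univ.image (μ ∘ t) : Finset _) : Set _) := by
      rw [Finset.coe_image, Finset.coe_univ, Set.image_univ]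
    rw [hP, hrange, Finset.convexHull_eq] at hxP
    obtain ⟨w, hw0, hw1, hwx⟩ := hxP
    set A : Finset (EuclideanSpace ℝ (Fin m)) := Finset.univ.image (μ ∘ t) with hA
    have hlx : l x = ∑ y ∈ A, w y * l y := by
      rw [← hwx, Finset.centerMass_eq_of_sum_1 _ _ hw1, map_sum]
      exact Finset.sum_congr rfl fun y _ => by simp
    have hAle : ∀ y ∈ A, l y ≤ c0 := fun y hy =>
      hPle y (subset_convexHull ℝ _ (by rw [hrange]; exact_mod_cast hy))
    have hzero' : ∀ y ∈ A, w y * (c0 - l y) = 0 := by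
      have hsum0 : ∑ y ∈ A, w y * (c0 - l y) = 0 := by
        have : ∑ y ∈ A, w y * (c0 - l y) = c0 * (∑ y ∈ A, w y) - ∑ y ∈ A, w y * l y := by
          rw [Finset.mul_sum, ← Finset.sum_sub_distrib]
          exact Finset.sum_congr rfl fun y _ => by ring
        rw [this, hw1, ← hlx, hxc0]; ring
      exact (Finset.sum_eq_zero_iff_of_nonneg fun y hy =>
        mul_nonneg (hw0 y hy) (by linarith [hAle y hy])).mp hsum0
    -- x is a convex combination of the active vertices
    have hxD : x = (A.filter (fun y => w y ≠ 0)).centerMass w id := by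
      rw [Finset.centerMass_filter_ne_zero, hwx]
    have hDsub : ((A.filter (fun y => w y ≠ 0)) : Set _) ⊆ μ '' (t '' (S : Set (Fin n))) := by
      intro y hy
      rw [Finset.coe_filter] at hy
      obtain ⟨hyA, hyw⟩ := hy
      have hlyc0 : l y = c0 := by
        have := hzero' y hyA
        rcases mul_eq_zero.mp this with h | h
        · exact absurd h hyw
        · linarith
      simp only [hA, Finset.mem_image, Finset.mem_univ, true_and] at hyA
      obtain ⟨i, hi⟩ := hyA
      have : eval (t i) p = 0 := by
        have := hlval (t i)
        rw [show μ (t i) = y from hi, hlyc0] at this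
        linarith
      exact ⟨t i, ⟨i, (hzero i).mp this, rfl⟩, hi⟩
    rw [hxD]
    have hsumpos : 0 < ∑ y ∈ A.filter (fun y => w y ≠ 0), w y := by
      rw [Finset.sum_filter_ne_zero, hw1]; norm_num
    exact convexHull_mono hDsub (Finset.centerMass_mem_convexHull _
      (fun y hy => hw0 y (Finset.filter_subset _ _ hy)) hsumpos
      (fun y hy => Finset.mem_coe.mpr hy))
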